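/- For ε sufficiently small and n sufficiently large: if T is an n-vertex tournament with δ⁰(T) ≥ ⌊(n+2)/4⌋ admitting a balanced bipartition V(T) = A₀ ∪ B₀ with e(A₀,B₀) ≥ (1−ε)|A₀||B₀|, then T admits a partition V(T) = A ∪ B ∪ X with |A|, |B| ≥ (1 − ε^{1/3})n/2, δ⁰(T[A]), δ⁰(T[B]) ≥ (1/6 − ε^{1/3})n, and e(A,B) ≥ (1 − ε^{1/3})|A||B|. -/

import Mathlib

open Finset

def IsTournament {V : Type*} (T : V → V → Prop) : Prop :=
  (∀ v, ¬ T v v) ∧ ∀ u v : V, u ≠ v → (T u v ↔ ¬ T v u)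

def inDeg {V : Type*} [Fintype V] (T : V → V → Prop) [DecidableRel T] (v : V) : ℕ :=
  (Finset.univ.filter (fun u => T u v)).card

def outDeg {V : Type*} [Fintype V] (T : V → V → Prop) [DecidableRel T] (v : V) : ℕ :=
  (Finset.univ.filter (fun u => T v u)).card

instance {V : Type*} (T : V → V → Prop) [DecidableRel T] :
    DecidablePred (fun p : V × V => T p.1 p.2) :=
  fun p => inferInstanceAs (Decidable (T p.1 p.2))

def eCount {V : Type*} (T : V → V → Prop) [DecidableRel T] (A B : Finset V) : ℕ :=
  ((A ×ˢ B).filter (fun p => T p.1 p.2)).card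

def minSemidegree {V : Type*} [Fintype V] (T : V → V → Prop) [DecidableRel T] : ℕ :=
  if h : (Finset.univ : Finset V).Nonempty then
    Finset.univ.inf' h (fun v => min (inDeg T v) (outDeg T v))
  else 0

lemma eCount_eq_sum_snd {V : Type} [DecidableEq V] (T : V → V → Prop) [DecidableRel T]
    (S S' : Finset V) :
    eCount T S S' = ∑ v ∈ S', (S.filter (fun u => T u v)).card := by
  unfold eCount
  rw [Finset.card_eq_sum_card_fiberwise (f := Prod.snd) (t := S')
    (fun p hp => (Finset.mem_product.1 (Finset.mem_filter.1 hp).1).2)]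
  refine Finset.sum_congr rfl fun v hv => ?_
  apply Finset.card_bij (fun p _ => p.1)
  · intro p hp
    simp only [Finset.mem_filter, Finset.mem_product] at hp
    obtain ⟨⟨⟨h1, h2⟩, h3⟩, h4⟩ := hp
    subst h4
    simp [Finset.mem_filter, h1, h3]
  · intro p hp q hq h
    simp only [Finset.mem_filter] at hp hq
    exact Prod.ext h (hp.2.trans hq.2.symm)
  · intro u hu
    simp only [Finset.mem_filter] at hu
    exact ⟨(u, v), by simp [Finset.mem_filter, Finset.mem_product, hu.1, hu.2, hv], rfl⟩

lemma eCount_eq_sum_fst {V : Type} [DecidableEq V] (T : V → V → Prop) [DecidableRel T]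
    (S S' : Finset V) :
    eCount T S S' = ∑ u ∈ S, (S'.filter (fun w => T u w)).card := by
  unfold eCount
  rw [Finset.card_eq_sum_card_fiberwise (f := Prod.fst) (t := S)
    (fun p hp => (Finset.mem_product.1 (Finset.mem_filter.1 hp).1).1)]
  refine Finset.sum_congr rfl fun u hu => ?_
  apply Finset.card_bij (fun p _ => p.2)
  · intro p hp
    simp only [Finset.mem_filter, Finset.mem_product] at hp
    obtain ⟨⟨⟨h1, h2⟩, h3⟩, h4⟩ := hp
    subst h4
    simp [Finset.mem_filter, h2, h3]
  · intro p hp q hq h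
    simp only [Finset.mem_filter] at hp hq
    exact Prod.ext (hp.2.trans hq.2.symm) h
  · intro w hw
    simp only [Finset.mem_filter] at hw
    exact ⟨(u, w), by simp [Finset.mem_filter, Finset.mem_product, hw.1, hw.2, hu], rfl⟩

lemma within_card {V : Type} [DecidableEq V] {T : V → V → Prop} [DecidableRel T]
    (hT : IsTournament T) {S : Finset V} {v : V} (hv : v ∈ S) :
    (S.filter (fun u => T u v)).card + (S.filter (fun u => T v u)).card + 1 = S.card := by
  have hdisj : Disjoint (S.filter (fun u => T u v)) (S.filter (fun u => T v u)) := by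
    rw [Finset.disjoint_left]
    intro u hu hu'
    simp only [Finset.mem_filter] at hu hu'
    have hne : u ≠ v := fun h => hT.1 v (h ▸ hu.2)
    exact ((hT.2 u v hne).1 hu.2) hu'.2
  have hun : (S.filter (fun u => T u v)) ∪ (S.filter (fun u => T v u)) = S.erase v := by
    ext u
    simp only [Finset.mem_union, Finset.mem_filter, Finset.mem_erase]
    constructor
    · rintro (⟨hu, h⟩ | ⟨hu, h⟩)
      · exact ⟨fun he => hT.1 v (he ▸ h), hu⟩
      · exact ⟨fun he => hT.1 v (he ▸ h), hu⟩
    · rintro ⟨hne, hu⟩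
      by_cases h : T u v
      · exact Or.inl ⟨hu, h⟩
      · exact Or.inr ⟨hu, ((hT.2 v u (Ne.symm hne)).2 h)⟩
  rw [← Finset.card_union_of_disjoint hdisj, hun, Finset.card_erase_add_one hv]

lemma cross_card {V : Type} [DecidableEq V] {T : V → V → Prop} [DecidableRel T]
    (hT : IsTournament T) {S : Finset V} {v : V} (hv : v ∉ S) :
    (S.filter (fun u => T u v)).card + (S.filter (fun u => T v u)).card = S.card := by
  have hdisj : Disjoint (S.filter (fun u => T u v)) (S.filter (fun u => T v u)) := by
    rw [Finset.disjoint_left]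
    intro u hu hu'
    simp only [Finset.mem_filter] at hu hu'
    have hne : u ≠ v := fun h => hT.1 v (h ▸ hu.2)
    exact ((hT.2 u v hne).1 hu.2) hu'.2
  have hun : (S.filter (fun u => T u v)) ∪ (S.filter (fun u => T v u)) = S := by
    ext u
    simp only [Finset.mem_union, Finset.mem_filter]
    constructor
    · rintro (⟨hu, _⟩ | ⟨hu, _⟩) <;> exact hu
    · intro hu
      have hne : u ≠ v := fun h => hv (h ▸ hu)
      by_cases h : T u v
      · exact Or.inl ⟨hu, h⟩
      · exact Or.inr ⟨hu, ((hT.2 v u (Ne.symm hne)).2 h)⟩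
  rw [← Finset.card_union_of_disjoint hdisj, hun]

lemma sum_dIn {V : Type} [DecidableEq V] {T : V → V → Prop} [DecidableRel T]
    (hT : IsTournament T) (S : Finset V) :
    2 * ∑ v ∈ S, (S.filter (fun u => T u v)).card + S.card = S.card * S.card := by
  have h1 := eCount_eq_sum_snd T S S
  have h2 := eCount_eq_sum_fst T S S
  have h3 : ∑ v ∈ S, ((S.filter (fun u => T u v)).card + (S.filter (fun u => T v u)).card + 1)
      = ∑ _v ∈ S, S.card := Finset.sum_congr rfl fun v hv => within_card hT hv
  rw [Finset.sum_add_distrib, Finset.sum_add_distrib, Finset.sum_const, smul_eq_mul,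
    Finset.sum_const, smul_eq_mul, mul_one] at h3
  have h4 : ∑ v ∈ S, (S.filter (fun u => T u v)).card = ∑ v ∈ S, (S.filter (fun u => T v u)).card :=
    h1.symm.trans h2
  omega

lemma sum_dOut {V : Type} [DecidableEq V] {T : V → V → Prop} [DecidableRel T]
    (hT : IsTournament T) (S : Finset V) :
    2 * ∑ v ∈ S, (S.filter (fun u => T v u)).card + S.card = S.card * S.card := by
  have h1 := eCount_eq_sum_snd T S S
  have h2 := eCount_eq_sum_fst T S S
  have := sum_dIn hT S
  omega

lemma cross_sum {V : Type} [DecidableEq V] {T : V → V → Prop} [DecidableRel T]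
    (hT : IsTournament T) {S S' : Finset V} (hd : Disjoint S S') :
    eCount T S S' + eCount T S' S = S.card * S'.card := by
  rw [eCount_eq_sum_fst, eCount_eq_sum_snd, ← Finset.sum_add_distrib]
  have : ∀ u ∈ S, (S'.filter (fun w => T u w)).card + (S'.filter (fun w => T w u)).card = S'.card := by
    intro u hu
    have hu' : u ∉ S' := Finset.disjoint_left.1 hd hu
    have := cross_card hT (S := S') (v := u) hu'
    omega
  rw [Finset.sum_congr rfl this, Finset.sum_const, smul_eq_mul]

lemma markov_trick {x c n : ℝ} (hc : 0 < c) (hn : 0 < n)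
    (h : x * (c^2*n) ≤ c^3*n^2/4) : x ≤ c*n/4 := by
  have hpos : 0 < c^2 * n := by positivity
  nlinarith

lemma bad2_trick {k aR D E c n s2 : ℝ} (hc : 0 < c) (hc10 : c ≤ 1/10) (hn : 1000 ≤ n)
    (hk : 0 ≤ k) (ha : 0 ≤ aR) (hD : 4*D ≤ n + 2) (haD : aR ≤ 2*D + 1)
    (hE : E ≤ c^3*n^2/4) (hs2 : s2 = aR - k)
    (h : k * (n/3) + (s2*D - E) ≤ (aR*aR - aR)/2) : k ≤ c*n/8 := by
  subst hs2
  have h1 : (aR*aR - aR)/2 ≤ aR * D := by nlinarith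
  have h2 : k * (n/3 - D) ≤ E := by nlinarith
  have h24 : n/24 ≤ n/3 - D := by linarith
  have h3 : k * (n/24) ≤ c^3*n^2/4 := le_trans (mul_le_mul_of_nonneg_left h24 hk) (h2.trans hE)
  have hcc : c*c ≤ 1/100 := by nlinarith
  have hcn2 : (0:ℝ) ≤ c*n^2 := by nlinarith [sq_nonneg n]
  have h4 : c^3*n^2 ≤ c*n^2/100 := by nlinarith [mul_le_mul_of_nonneg_right hcc hcn2]
  have hnpos : (0:ℝ) < n/24 := by linarith
  rw [← mul_le_mul_iff_left₀ hnpos]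
  calc k*(n/24) ≤ c^3*n^2/4 := h3
    _ ≤ c*n^2/400 := by linarith
    _ ≤ c*n/8*(n/24) := by nlinarith [hcn2]

lemma final_trick {c n x y : ℝ} (hc : 0 < c) (hc10 : c ≤ 1/10) (hn : 0 ≤ n)
    (hx : (1-c)*n/2 ≤ x) (hy : (1-c)*n/2 ≤ y) : c^3*n^2/4 ≤ c*(x*y) := by
  have hx' : 9*n/20 ≤ x := by nlinarith
  have hy' : 9*n/20 ≤ y := by nlinarith
  have hxn : (0:ℝ) ≤ 9*n/20 := by linarith
  have hxy : (9*n/20)*(9*n/20) ≤ x*y := mul_le_mul hx' hy' hxn (by linarith)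
  have hcc : c*c ≤ 1/100 := by nlinarith
  nlinarith [mul_le_mul_of_nonneg_left hxy hc.le, mul_nonneg hc.le (sq_nonneg n),
    mul_le_mul_of_nonneg_right hcc (mul_nonneg hc.le (sq_nonneg n))]

set_option maxHeartbeats 1600000 in
theorem stmt_7 : ∃ ε₀ : ℝ, 0 < ε₀ ∧ ∀ ε : ℝ, 0 < ε → ε ≤ ε₀ →
    ∃ n₀ : ℕ, ∀ n : ℕ, n₀ ≤ n →
    ∀ (V : Type) [Fintype V] [DecidableEq V] (T : V → V → Prop) [DecidableRel T],
      IsTournament T → Fintype.card V = n →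
      (∀ v : V, (n + 2)/4 ≤ inDeg T v ∧ (n + 2)/4 ≤ outDeg T v) →
      (∃ A₀ B₀ : Finset V, Disjoint A₀ B₀ ∧ A₀ ∪ B₀ = Finset.univ ∧ A₀.card = n/2 ∧
          (1 - ε) * A₀.card * B₀.card ≤ (eCount T A₀ B₀ : ℝ)) →
      ∃ A B X : Finset V, Disjoint A B ∧ Disjoint A X ∧ Disjoint B X ∧
        A ∪ B ∪ X = Finset.univ ∧
        (1 - ε ^ ((1:ℝ)/3)) * n / 2 ≤ (A.card : ℝ) ∧
        (1 - ε ^ ((1:ℝ)/3)) * n / 2 ≤ (B.card : ℝ) ∧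
        (∀ v ∈ A, (1/6 - ε ^ ((1:ℝ)/3)) * n ≤ ((A.filter (fun u => T u v)).card : ℝ) ∧
                  (1/6 - ε ^ ((1:ℝ)/3)) * n ≤ ((A.filter (fun u => T v u)).card : ℝ)) ∧
        (∀ v ∈ B, (1/6 - ε ^ ((1:ℝ)/3)) * n ≤ ((B.filter (fun u => T u v)).card : ℝ) ∧
                  (1/6 - ε ^ ((1:ℝ)/3)) * n ≤ ((B.filter (fun u => T v u)).card : ℝ)) ∧
        (1 - ε ^ ((1:ℝ)/3)) * A.card * B.card ≤ (eCount T A B : ℝ) := by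
  classical
  refine ⟨1/1000, by norm_num, ?_⟩
  intro ε hε hε₀
  refine ⟨⌈(1000:ℝ)/ε⌉₊, ?_⟩
  intro n hn V _ _ T _ hT hcard hdeg hbip
  obtain ⟨A₀, B₀, hdisj, hunion, hA₀card, hE⟩ := hbip
  set c : ℝ := ε ^ ((1:ℝ)/3) with hc_def
  have hcpos : 0 < c := Real.rpow_pos_of_pos hε _
  have hc3 : c ^ 3 = ε := by
    rw [hc_def, ← Real.rpow_natCast (ε ^ ((1:ℝ)/3)) 3, ← Real.rpow_mul hε.le]
    norm_num
  have hc10 : c ≤ 1/10 := by nlinarith [hcpos.le, sq_nonneg c, sq_nonneg (c - 1/10), sq_nonneg (c + 1/10)]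
  have hεc : ε ≤ c := by nlinarith [hcpos.le, sq_nonneg c]
  -- n bounds
  have hnR : (1000:ℝ)/ε ≤ (n:ℝ) := le_trans (Nat.le_ceil _) (by exact_mod_cast hn)
  have hn1000 : (1000:ℝ) ≤ ε * n := by
    rw [div_le_iff₀ hε] at hnR; linarith
  have hcn : (1000:ℝ) ≤ c * n := by nlinarith [Nat.cast_nonneg (α := ℝ) n]
  have hnpos : (1000:ℝ) ≤ (n:ℝ) := by nlinarith
  have hn12 : 12 ≤ n := by
    by_contra h
    push_neg at h
    have : (n:ℝ) < 12 := by exact_mod_cast h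
    linarith
  have hc2n : c^2 * n ≤ c * n / 10 := by nlinarith [hcpos.le]
  -- cardinalities
  have hab : A₀.card + B₀.card = n := by
    rw [← Finset.card_union_of_disjoint hdisj, hunion, Finset.card_univ, hcard]
  set a := A₀.card with ha_def
  set b := B₀.card with hb_def
  set D := (n + 2)/4 with hD_def
  have hDdeg : ∀ v : V, D ≤ inDeg T v ∧ D ≤ outDeg T v := hdeg
  have han : 2*a ≤ n ∧ n ≤ 2*a + 1 := by omega
  have hDn : 4*D ≤ n + 2 ∧ n ≤ 4*D + 1 := by omega
  have haD : a ≤ 2*D + 1 := by omega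
  have hbD : b ≤ 2*D + 1 := by omega
  -- real versions
  have haR1 : ((n:ℝ) - 1)/2 ≤ (a:ℝ) := by
    have h := han.2
    have : (n:ℝ) ≤ 2*(a:ℝ) + 1 := by exact_mod_cast h
    linarith
  have haR2 : (a:ℝ) ≤ (n:ℝ)/2 := by
    have h := han.1
    have : 2*(a:ℝ) ≤ (n:ℝ) := by exact_mod_cast h
    linarith
  have hbR1 : (n:ℝ)/2 ≤ (b:ℝ) := by
    have : (a:ℝ) + b = n := by exact_mod_cast hab
    linarith
  have hDR1 : ((n:ℝ) - 1)/4 ≤ (D:ℝ) := by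
    have h := hDn.2
    have : (n:ℝ) ≤ 4*(D:ℝ) + 1 := by exact_mod_cast h
    linarith
  have hDR2 : (D:ℝ) ≤ ((n:ℝ) + 2)/4 := by
    have h := hDn.1
    have : 4*(D:ℝ) ≤ (n:ℝ) + 2 := by exact_mod_cast h
    linarith
  -- cross edge count
  set E := eCount T B₀ A₀ with hE_def
  have hcross0 : eCount T A₀ B₀ + E = a * b := cross_sum hT hdisj
  have hEab : (E:ℝ) ≤ ε * ((a:ℝ) * b) := by
    have h' : (eCount T A₀ B₀ : ℝ) + E = (a:ℝ) * b := by exact_mod_cast hcross0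
    have h2 : (1 - ε) * (a:ℝ) * b = (a:ℝ)*b - ε*((a:ℝ)*b) := by ring
    linarith [hE]
  have habn : (a:ℝ) * b ≤ (n:ℝ)^2/4 := by
    have h' : (a:ℝ) + b = n := by exact_mod_cast hab
    have h'' : (a:ℝ) * b * 4 = (n:ℝ)^2 - ((a:ℝ) - b)^2 := by rw [← h']; ring
    linarith [sq_nonneg ((a:ℝ) - (b:ℝ))]
  have hEn : (E:ℝ) ≤ c^3 * (n:ℝ)^2 / 4 := by
    rw [hc3]
    have := mul_le_mul_of_nonneg_left habn hε.le
    linarith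
  -- degree splits
  have hinsplit : ∀ v : V, (A₀.filter (fun u => T u v)).card + (B₀.filter (fun u => T u v)).card = inDeg T v := by
    intro v
    rw [inDeg, ← hunion, Finset.filter_union,
      Finset.card_union_of_disjoint (Finset.disjoint_filter_filter hdisj)]
  have houtsplit : ∀ v : V, (A₀.filter (fun u => T v u)).card + (B₀.filter (fun u => T v u)).card = outDeg T v := by
    intro v
    rw [outDeg, ← hunion, Finset.filter_union,
      Finset.card_union_of_disjoint (Finset.disjoint_filter_filter hdisj)]
  have hpsum : ∑ v ∈ A₀, (B₀.filter (fun u => T u v)).card = E := (eCount_eq_sum_snd T B₀ A₀).symm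
  have hqsum : ∑ w ∈ B₀, (A₀.filter (fun u => T w u)).card = E := (eCount_eq_sum_fst T B₀ A₀).symm
  -- bad sets
  set bA1 := A₀.filter (fun v => c^2 * n ≤ ((B₀.filter (fun u => T u v)).card : ℝ)) with hbA1_def
  set bA2 := A₀.filter (fun v => (n:ℝ)/3 < ((A₀.filter (fun u => T u v)).card : ℝ)) with hbA2_def
  set bB1 := B₀.filter (fun w => c^2 * n ≤ ((A₀.filter (fun u => T w u)).card : ℝ)) with hbB1_def
  set bB2 := B₀.filter (fun w => (n:ℝ)/3 < ((B₀.filter (fun u => T w u)).card : ℝ)) with hbB2_def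
  have hnn : ∀ (S : Finset V) (f : V → ℕ), (0:ℝ) ≤ ∑ v ∈ S, (f v : ℝ) :=
    fun S f => Finset.sum_nonneg fun v _ => Nat.cast_nonneg _
  -- bound on bA1
  have hbA1 : (bA1.card : ℝ) ≤ c * n / 4 := by
    have h1 : (bA1.card : ℝ) * (c^2 * n) ≤ ∑ v ∈ bA1, ((B₀.filter (fun u => T u v)).card : ℝ) := by
      have := Finset.card_nsmul_le_sum bA1 (fun v => ((B₀.filter (fun u => T u v)).card : ℝ)) (c^2 * n)
        (fun v hv => (Finset.mem_filter.1 hv).2)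
      rwa [nsmul_eq_mul] at this
    have h2 : ∑ v ∈ bA1, ((B₀.filter (fun u => T u v)).card : ℝ) ≤ (E:ℝ) := by
      rw [← hpsum]
      push_cast
      exact Finset.sum_le_sum_of_subset_of_nonneg (Finset.filter_subset _ _)
        (fun v _ _ => Nat.cast_nonneg _)
    exact markov_trick hcpos (by linarith) (h1.trans (h2.trans hEn))
  have hbB1 : (bB1.card : ℝ) ≤ c * n / 4 := by
    have h1 : (bB1.card : ℝ) * (c^2 * n) ≤ ∑ w ∈ bB1, ((A₀.filter (fun u => T w u)).card : ℝ) := by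
      have := Finset.card_nsmul_le_sum bB1 (fun w => ((A₀.filter (fun u => T w u)).card : ℝ)) (c^2 * n)
        (fun w hw => (Finset.mem_filter.1 hw).2)
      rwa [nsmul_eq_mul] at this
    have h2 : ∑ w ∈ bB1, ((A₀.filter (fun u => T w u)).card : ℝ) ≤ (E:ℝ) := by
      rw [← hqsum]
      push_cast
      exact Finset.sum_le_sum_of_subset_of_nonneg (Finset.filter_subset _ _)
        (fun v _ _ => Nat.cast_nonneg _)
    exact markov_trick hcpos (by linarith) (h1.trans (h2.trans hEn))
  -- bound on bA2
  have hDR3 : 4*(D:ℝ) ≤ (n:ℝ) + 2 := by exact_mod_cast hDn.1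
  have haDR : (a:ℝ) ≤ 2*(D:ℝ) + 1 := by exact_mod_cast haD
  have hbDR : (b:ℝ) ≤ 2*(D:ℝ) + 1 := by exact_mod_cast hbD
  have hbA2 : (bA2.card : ℝ) ≤ c * n / 8 := by
    have hlow1 : (bA2.card:ℝ) * ((n:ℝ)/3) ≤ ∑ v ∈ bA2, ((A₀.filter (fun u => T u v)).card:ℝ) := by
      have := Finset.card_nsmul_le_sum bA2 (fun v => ((A₀.filter (fun u => T u v)).card:ℝ)) ((n:ℝ)/3)
        (fun v hv => le_of_lt (Finset.mem_filter.1 hv).2)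
      rwa [nsmul_eq_mul] at this
    set S' := A₀.filter (fun v => ¬ ((n:ℝ)/3 < ((A₀.filter (fun u => T u v)).card : ℝ))) with hS'_def
    have hsplit : ∑ v ∈ bA2, ((A₀.filter (fun u => T u v)).card:ℝ)
        + ∑ v ∈ S', ((A₀.filter (fun u => T u v)).card:ℝ)
        = ∑ v ∈ A₀, ((A₀.filter (fun u => T u v)).card:ℝ) :=
      Finset.sum_filter_add_sum_filter_not A₀ _ _
    have hcardS' : bA2.card + S'.card = a :=
      Finset.card_filter_add_card_filter_not (s := A₀)
        (p := fun v => (n:ℝ)/3 < ((A₀.filter (fun u => T u v)).card : ℝ))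
    have hper : ∀ v ∈ S', (D:ℝ) - ((B₀.filter (fun u => T u v)).card:ℝ)
        ≤ ((A₀.filter (fun u => T u v)).card:ℝ) := by
      intro v _
      have h1 := hinsplit v
      have h2 := (hdeg v).1
      have h3 : D ≤ (A₀.filter (fun u => T u v)).card + (B₀.filter (fun u => T u v)).card := by
        rw [h1]; exact h2
      have h4 : (D:ℝ) ≤ ((A₀.filter (fun u => T u v)).card:ℝ) + ((B₀.filter (fun u => T u v)).card:ℝ) := by
        exact_mod_cast h3
      linarith
    have hsub : ∑ v ∈ S', ((B₀.filter (fun u => T u v)).card:ℝ) ≤ (E:ℝ) := by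
      rw [← hpsum]
      push_cast
      exact Finset.sum_le_sum_of_subset_of_nonneg (Finset.filter_subset _ _)
        (fun v _ _ => Nat.cast_nonneg _)
    have hlow2 : (S'.card:ℝ) * D - E ≤ ∑ v ∈ S', ((A₀.filter (fun u => T u v)).card:ℝ) := by
      have hstep : ∑ v ∈ S', ((D:ℝ) - ((B₀.filter (fun u => T u v)).card:ℝ))
          ≤ ∑ v ∈ S', ((A₀.filter (fun u => T u v)).card:ℝ) := Finset.sum_le_sum hper
      rw [Finset.sum_sub_distrib, Finset.sum_const, nsmul_eq_mul] at hstep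
      linarith
    have hsumAR : ∑ v ∈ A₀, ((A₀.filter (fun u => T u v)).card:ℝ) = ((a:ℝ)*a - a)/2 := by
      have h := congrArg (Nat.cast : ℕ → ℝ) (sum_dIn hT A₀)
      push_cast at h
      linarith
    have hs2' : ((S'.card:ℕ):ℝ) = (a:ℝ) - (bA2.card:ℝ) := by
      have : (bA2.card:ℝ) + (S'.card:ℝ) = (a:ℝ) := by exact_mod_cast hcardS'
      linarith
    exact bad2_trick hcpos hc10 hnpos (Nat.cast_nonneg _) (Nat.cast_nonneg _) hDR3 haDR hEn
      hs2' (by linarith)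
  have hbB2 : (bB2.card : ℝ) ≤ c * n / 8 := by
    have hlow1 : (bB2.card:ℝ) * ((n:ℝ)/3) ≤ ∑ v ∈ bB2, ((B₀.filter (fun u => T v u)).card:ℝ) := by
      have := Finset.card_nsmul_le_sum bB2 (fun v => ((B₀.filter (fun u => T v u)).card:ℝ)) ((n:ℝ)/3)
        (fun v hv => le_of_lt (Finset.mem_filter.1 hv).2)
      rwa [nsmul_eq_mul] at this
    set S' := B₀.filter (fun v => ¬ ((n:ℝ)/3 < ((B₀.filter (fun u => T v u)).card : ℝ))) with hS'_def
    have hsplit : ∑ v ∈ bB2, ((B₀.filter (fun u => T v u)).card:ℝ)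
        + ∑ v ∈ S', ((B₀.filter (fun u => T v u)).card:ℝ)
        = ∑ v ∈ B₀, ((B₀.filter (fun u => T v u)).card:ℝ) :=
      Finset.sum_filter_add_sum_filter_not B₀ _ _
    have hcardS' : bB2.card + S'.card = b :=
      Finset.card_filter_add_card_filter_not (s := B₀)
        (p := fun v => (n:ℝ)/3 < ((B₀.filter (fun u => T v u)).card : ℝ))
    have hper : ∀ v ∈ S', (D:ℝ) - ((A₀.filter (fun u => T v u)).card:ℝ)
        ≤ ((B₀.filter (fun u => T v u)).card:ℝ) := by
      intro v _
      have h1 := houtsplit v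
      have h2 := (hdeg v).2
      have h3 : D ≤ (A₀.filter (fun u => T v u)).card + (B₀.filter (fun u => T v u)).card := by
        rw [h1]; exact h2
      have h4 : (D:ℝ) ≤ ((A₀.filter (fun u => T v u)).card:ℝ) + ((B₀.filter (fun u => T v u)).card:ℝ) := by
        exact_mod_cast h3
      linarith
    have hsub : ∑ v ∈ S', ((A₀.filter (fun u => T v u)).card:ℝ) ≤ (E:ℝ) := by
      rw [← hqsum]
      push_cast
      exact Finset.sum_le_sum_of_subset_of_nonneg (Finset.filter_subset _ _)
        (fun v _ _ => Nat.cast_nonneg _)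
    have hlow2 : (S'.card:ℝ) * D - E ≤ ∑ v ∈ S', ((B₀.filter (fun u => T v u)).card:ℝ) := by
      have hstep : ∑ v ∈ S', ((D:ℝ) - ((A₀.filter (fun u => T v u)).card:ℝ))
          ≤ ∑ v ∈ S', ((B₀.filter (fun u => T v u)).card:ℝ) := Finset.sum_le_sum hper
      rw [Finset.sum_sub_distrib, Finset.sum_const, nsmul_eq_mul] at hstep
      linarith
    have hsumBR : ∑ v ∈ B₀, ((B₀.filter (fun u => T v u)).card:ℝ) = ((b:ℝ)*b - b)/2 := by
      have h := congrArg (Nat.cast : ℕ → ℝ) (sum_dOut hT B₀)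
      push_cast at h
      linarith
    have hs2' : ((S'.card:ℕ):ℝ) = (b:ℝ) - (bB2.card:ℝ) := by
      have : (bB2.card:ℝ) + (S'.card:ℝ) = (b:ℝ) := by exact_mod_cast hcardS'
      linarith
    exact bad2_trick hcpos hc10 hnpos (Nat.cast_nonneg _) (Nat.cast_nonneg _) hDR3 hbDR hEn
      hs2' (by linarith)
  -- construct the partition
  set XA := bA1 ∪ bA2 with hXA_def
  set XB := bB1 ∪ bB2 with hXB_def
  have hXAsub : XA ⊆ A₀ := Finset.union_subset (Finset.filter_subset _ _) (Finset.filter_subset _ _)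
  have hXBsub : XB ⊆ B₀ := Finset.union_subset (Finset.filter_subset _ _) (Finset.filter_subset _ _)
  set A := A₀ \ XA with hA_def
  set B := B₀ \ XB with hB_def
  have hXAcard : (XA.card:ℝ) ≤ 3*c*n/8 := by
    have h' : (XA.card:ℝ) ≤ (bA1.card:ℝ) + (bA2.card:ℝ) := by
      exact_mod_cast Finset.card_union_le bA1 bA2
    linarith
  have hXBcard : (XB.card:ℝ) ≤ 3*c*n/8 := by
    have h' : (XB.card:ℝ) ≤ (bB1.card:ℝ) + (bB2.card:ℝ) := by
      exact_mod_cast Finset.card_union_le bB1 bB2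
    linarith
  have hAcard : A.card + XA.card = a := Finset.card_sdiff_add_card_eq_card hXAsub
  have hBcard : B.card + XB.card = b := Finset.card_sdiff_add_card_eq_card hXBsub
  have hAcardR : ((n:ℝ)-1)/2 - 3*c*n/8 ≤ (A.card:ℝ) := by
    have h' : (A.card:ℝ) + (XA.card:ℝ) = (a:ℝ) := by exact_mod_cast hAcard
    linarith
  have hBcardR : (n:ℝ)/2 - 3*c*n/8 ≤ (B.card:ℝ) := by
    have h' : (B.card:ℝ) + (XB.card:ℝ) = (b:ℝ) := by exact_mod_cast hBcard
    linarith
  have hunionA : A ∪ XA = A₀ := Finset.sdiff_union_of_subset hXAsub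
  have hunionB : B ∪ XB = B₀ := Finset.sdiff_union_of_subset hXBsub
  have hdisAB : Disjoint A B := hdisj.mono Finset.sdiff_subset Finset.sdiff_subset
  have hAfilter : ∀ (P : V → Prop) [DecidablePred P],
      (A₀.filter P).card ≤ (A.filter P).card + XA.card := by
    intro P _
    calc (A₀.filter P).card = ((A ∪ XA).filter P).card := by rw [hunionA]
      _ = (A.filter P ∪ XA.filter P).card := by rw [Finset.filter_union]
      _ ≤ (A.filter P).card + (XA.filter P).card := Finset.card_union_le _ _
      _ ≤ (A.filter P).card + XA.card :=
          Nat.add_le_add_left (Finset.card_filter_le _ _) _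
  have hBfilter : ∀ (P : V → Prop) [DecidablePred P],
      (B₀.filter P).card ≤ (B.filter P).card + XB.card := by
    intro P _
    calc (B₀.filter P).card = ((B ∪ XB).filter P).card := by rw [hunionB]
      _ = (B.filter P ∪ XB.filter P).card := by rw [Finset.filter_union]
      _ ≤ (B.filter P).card + (XB.filter P).card := Finset.card_union_le _ _
      _ ≤ (B.filter P).card + XB.card :=
          Nat.add_le_add_left (Finset.card_filter_le _ _) _
  refine ⟨A, B, XA ∪ XB, hdisAB, ?_, ?_, ?_, ?_, ?_, ?_, ?_, ?_⟩
  · exact Finset.disjoint_union_right.2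
      ⟨Finset.sdiff_disjoint, (hdisj.mono Finset.sdiff_subset hXBsub)⟩
  · exact Finset.disjoint_union_right.2
      ⟨(hdisj.symm.mono Finset.sdiff_subset hXAsub), Finset.sdiff_disjoint⟩
  · rw [← hunion, ← hunionA, ← hunionB]
    ext x
    simp only [Finset.mem_union]
    tauto
  · -- |A| large
    linarith
  · -- |B| large
    linarith
  · -- degrees in A
    intro v hv
    have hmem := Finset.mem_sdiff.1 hv
    have hnot := hmem.2
    rw [hXA_def, Finset.mem_union, hbA1_def, hbA2_def, Finset.mem_filter, Finset.mem_filter] at hnot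
    push_neg at hnot
    have hv1 : ((B₀.filter (fun u => T u v)).card : ℝ) < c^2*n := hnot.1 hmem.1
    have hv2 : ((A₀.filter (fun u => T u v)).card : ℝ) ≤ (n:ℝ)/3 := hnot.2 hmem.1
    have hDle : (D:ℝ) ≤ ((A₀.filter (fun u => T u v)).card:ℝ) + ((B₀.filter (fun u => T u v)).card:ℝ) := by
      have h3 : D ≤ (A₀.filter (fun u => T u v)).card + (B₀.filter (fun u => T u v)).card := by
        rw [hinsplit v]; exact (hdeg v).1
      exact_mod_cast h3
    constructor
    · have hkey : ((A₀.filter (fun u => T u v)).card:ℝ) ≤ ((A.filter (fun u => T u v)).card:ℝ) + (XA.card:ℝ) := by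
        exact_mod_cast hAfilter (fun u => T u v)
      linarith
    · have hw := within_card hT (S := A₀) (v := v) hmem.1
      have hwR : ((A₀.filter (fun u => T u v)).card:ℝ) + ((A₀.filter (fun u => T v u)).card:ℝ) + 1 = (a:ℝ) := by
        exact_mod_cast hw
      have hkey : ((A₀.filter (fun u => T v u)).card:ℝ) ≤ ((A.filter (fun u => T v u)).card:ℝ) + (XA.card:ℝ) := by
        exact_mod_cast hAfilter (fun u => T v u)
      linarith
  · -- degrees in B
    intro v hv
    have hmem := Finset.mem_sdiff.1 hv
    have hnot := hmem.2
    rw [hXB_def, Finset.mem_union, hbB1_def, hbB2_def, Finset.mem_filter, Finset.mem_filter] at hnot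
    push_neg at hnot
    have hv1 : ((A₀.filter (fun u => T v u)).card : ℝ) < c^2*n := hnot.1 hmem.1
    have hv2 : ((B₀.filter (fun u => T v u)).card : ℝ) ≤ (n:ℝ)/3 := hnot.2 hmem.1
    have hDle : (D:ℝ) ≤ ((A₀.filter (fun u => T v u)).card:ℝ) + ((B₀.filter (fun u => T v u)).card:ℝ) := by
      have h3 : D ≤ (A₀.filter (fun u => T v u)).card + (B₀.filter (fun u => T v u)).card := by
        rw [houtsplit v]; exact (hdeg v).2
      exact_mod_cast h3
    have hw := within_card hT (S := B₀) (v := v) hmem.1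
    have hwR : ((B₀.filter (fun u => T u v)).card:ℝ) + ((B₀.filter (fun u => T v u)).card:ℝ) + 1 = (b:ℝ) := by
      exact_mod_cast hw
    constructor
    · have hkey : ((B₀.filter (fun u => T u v)).card:ℝ) ≤ ((B.filter (fun u => T u v)).card:ℝ) + (XB.card:ℝ) := by
        exact_mod_cast hBfilter (fun u => T u v)
      linarith
    · have hkey : ((B₀.filter (fun u => T v u)).card:ℝ) ≤ ((B.filter (fun u => T v u)).card:ℝ) + (XB.card:ℝ) := by
        exact_mod_cast hBfilter (fun u => T v u)
      linarith
  · -- cross edges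
    have hcr : eCount T A B + eCount T B A = A.card * B.card := cross_sum hT hdisAB
    have hcrR : (eCount T A B:ℝ) + (eCount T B A:ℝ) = (A.card:ℝ) * (B.card:ℝ) := by
      exact_mod_cast hcr
    have hsubBA : eCount T B A ≤ E := by
      apply Finset.card_le_card
      apply Finset.filter_subset_filter
      exact Finset.product_subset_product Finset.sdiff_subset Finset.sdiff_subset
    have hBAR : (eCount T B A : ℝ) ≤ c^3*n^2/4 := le_trans (by exact_mod_cast hsubBA) hEn
    have hAbig : (1-c)*(n:ℝ)/2 ≤ (A.card:ℝ) := by linarith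
    have hBbig : (1-c)*(n:ℝ)/2 ≤ (B.card:ℝ) := by linarith
    have hf := final_trick hcpos hc10 (Nat.cast_nonneg n) hAbig hBbig
    have hring : (1-c)*(A.card:ℝ)*(B.card:ℝ) = (A.card:ℝ)*(B.card:ℝ) - c*((A.card:ℝ)*(B.card:ℝ)) := by
      ring
    linarith
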